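/- In a minimum counterexample (with respect to number of vertices) to the statement 'every subcubic K_4-minor-free graph has exact square chromatic number at most 4', there is no vertex of degree 2 lying on a cycle of length 3 or 4. -/

import Mathlib

/-- The exact square of a graph `G`: two distinct vertices are adjacent iff
their distance in `G` is exactly `2`. -/
def exactSquare {V : Type*} (G : SimpleGraph V) : SimpleGraph V where
  Adj u v := G.dist u v = 2
  symm := ⟨by intro u v h; rwa [SimpleGraph.dist_comm]⟩
  loopless := ⟨by intro v h; simp [SimpleGraph.dist_self] at h⟩

/-- `G` has `H` as a minor: there is a family of nonempty, pairwise disjoint,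
connected branch sets in `G`, one for each vertex of `H`, such that every edge
of `H` is realized by an edge of `G` between the corresponding branch sets. -/
def HasMinor {V W : Type*} (G : SimpleGraph V) (H : SimpleGraph W) : Prop :=
  ∃ B : W → Set V,
    (∀ w, (B w).Nonempty) ∧
    (∀ w, (G.induce (B w)).Connected) ∧
    (Pairwise fun w w' => Disjoint (B w) (B w')) ∧
    ∀ ⦃w w'⦄, H.Adj w w' → ∃ u ∈ B w, ∃ v ∈ B w', G.Adj u v

/-- Planarity, via Wagner's theorem: a graph is planar iff it has neither a
`K₅` minor nor a `K₃,₃` minor. -/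
def IsPlanar {V : Type*} (G : SimpleGraph V) : Prop :=
  ¬ HasMinor G (SimpleGraph.completeGraph (Fin 5)) ∧
    ¬ HasMinor G (completeBipartiteGraph (Fin 3) (Fin 3))

private lemma exists_mid_of_dist_two {V : Type*} {G : SimpleGraph V} {u w : V}
    (h : G.dist u w = 2) : ∃ x, G.Adj u x ∧ G.Adj x w := by
  obtain ⟨p, hp⟩ := SimpleGraph.exists_walk_of_dist_ne_zero (by rw [h]; exact two_ne_zero)
  rw [h] at hp
  cases p with
  | nil => simp at hp
  | cons h1 q =>
    cases q with
    | nil => simp at hp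
    | cons h2 r =>
      cases r with
      | nil => exact ⟨_, h1, h2⟩
      | cons h3 s => simp [SimpleGraph.Walk.length_cons] at hp

private lemma dist_eq_two' {V : Type*} {G : SimpleGraph V} {u w x : V} (hne : u ≠ w)
    (hnadj : ¬ G.Adj u w) (h1 : G.Adj u x) (h2 : G.Adj x w) : G.dist u w = 2 := by
  have hle := SimpleGraph.dist_le (SimpleGraph.Walk.cons h1 (SimpleGraph.Walk.cons h2 SimpleGraph.Walk.nil))
  simp only [SimpleGraph.Walk.length_cons, SimpleGraph.Walk.length_nil] at hle
  have h0 : G.dist u w ≠ 0 := by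
    rw [SimpleGraph.dist_ne_zero_iff_ne_and_reachable]
    exact ⟨hne, ⟨SimpleGraph.Walk.cons h1 (SimpleGraph.Walk.cons h2 SimpleGraph.Walk.nil)⟩⟩
  have h1' : G.dist u w ≠ 1 := fun hh => hnadj (SimpleGraph.dist_eq_one_iff_adj.mp hh)
  omega

private lemma hasMinor_of_comap {V W X : Type*} {G : SimpleGraph V} {f : W → V}
    (hf : Function.Injective f) {K : SimpleGraph X}
    (h : HasMinor (G.comap f) K) : HasMinor G K := by
  obtain ⟨B, hne, hconn, hdisj, hedge⟩ := h
  refine ⟨fun k => f '' B k, fun k => (hne k).image f, fun k => ?_, fun k k' hkk' => ?_, ?_⟩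
  · exact (hconn k).map ⟨fun x => ⟨f x.1, ⟨x.1, x.2, rfl⟩⟩, fun h => h⟩
      (by rintro ⟨y, x, hx, rfl⟩; exact ⟨⟨x, hx⟩, rfl⟩)
  · exact (Set.disjoint_image_iff hf).mpr (hdisj hkk')
  · intro k k' hadj
    obtain ⟨u, hu, x, hx, hux⟩ := hedge hadj
    exact ⟨f u, ⟨u, hu, rfl⟩, f x, ⟨x, hx, rfl⟩, hux⟩

/-- In a minimum counterexample (w.r.t. number of vertices) to the statement
"every subcubic `K₄`-minor-free graph has exact square chromatic number at most
`4`", no vertex of degree `2` lies on a cycle of length `3` or `4`. -/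
theorem min_counterexample_no_2vertex_on_short_cycle
    (n : ℕ) (G : SimpleGraph (Fin n))
    (hdeg : ∀ v, (G.neighborSet v).ncard ≤ 3)
    (hK4 : ¬ HasMinor G (SimpleGraph.completeGraph (Fin 4)))
    (hbad : ¬ (exactSquare G).chromaticNumber ≤ 4)
    (hmin : ∀ (m : ℕ) (H : SimpleGraph (Fin m)), m < n →
      (∀ v, (H.neighborSet v).ncard ≤ 3) →
      ¬ HasMinor H (SimpleGraph.completeGraph (Fin 4)) →
      (exactSquare H).chromaticNumber ≤ 4) :
    ¬ ∃ (v : Fin n) (w : G.Walk v v),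
        (G.neighborSet v).ncard = 2 ∧ w.IsCycle ∧ (w.length = 3 ∨ w.length = 4) := by
  rintro ⟨v, w, h2, hcyc, hlen⟩
  have hpos : 0 < n := v.pos
  obtain ⟨m, rfl⟩ : ∃ m, n = m + 1 := ⟨n - 1, by omega⟩
  -- extract the structure of the short cycle
  obtain ⟨a, b, hab, hva, hvb, hcase⟩ :
      ∃ a b, a ≠ b ∧ G.Adj v a ∧ G.Adj v b ∧
        (G.Adj a b ∨ ∃ c, c ≠ v ∧ G.Adj a c ∧ G.Adj c b) := by
    clear hbad hmin hK4 hdeg h2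
    rcases hlen with h3 | h4
    · cases w with
      | nil => simp at h3
      | cons h1 p =>
        cases p with
        | nil => simp at h3
        | cons hh2 q =>
          cases q with
          | nil => simp at h3
          | cons hh3 r =>
            cases r with
            | cons hh4 s => simp only [SimpleGraph.Walk.length_cons] at h3; omega
            | nil =>
              have hnd := hcyc.support_nodup
              simp [SimpleGraph.Walk.support_cons, List.nodup_cons] at hnd
              refine ⟨_, _, ?_, h1, hh3.symm, Or.inl hh2⟩
              tauto
    · cases w with
      | nil => simp at h4
      | cons h1 p =>
        cases p with
        | nil => simp at h4
        | cons hh2 q =>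
          cases q with
          | nil => simp at h4
          | cons hh3 r =>
            cases r with
            | nil => simp at h4
            | cons hh4 s =>
              cases s with
              | cons hh5 t => simp only [SimpleGraph.Walk.length_cons] at h4; omega
              | nil =>
                have hnd := hcyc.support_nodup
                simp [SimpleGraph.Walk.support_cons, List.nodup_cons] at hnd
                refine ⟨_, _, ?_, h1, hh4.symm, Or.inr ⟨_, ?_, hh2, hh3⟩⟩
                · tauto
                · tauto
  -- the neighbor set of v is exactly {a, b}
  have hNv : G.neighborSet v = {a, b} := by
    refine (Set.eq_of_subset_of_ncard_le ?_ ?_ (Set.toFinite _)).symm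
    · rintro x hx
      simp only [Set.mem_insert_iff, Set.mem_singleton_iff] at hx
      rcases hx with rfl | rfl
      · exact hva
      · exact hvb
    · rw [h2, Set.ncard_pair hab]
  have hAdjv : ∀ x, G.Adj v x → x = a ∨ x = b := by
    intro x hx
    have : x ∈ G.neighborSet v := hx
    rw [hNv] at this
    simpa using this
  -- the vertex-deleted graph
  set f : Fin m → Fin (m + 1) := v.succAbove with hf
  have hfinj : Function.Injective f := Fin.succAbove_right_injective
  have hfne : ∀ i, f i ≠ v := fun i => Fin.succAbove_ne v i
  set H : SimpleGraph (Fin m) := G.comap f with hH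
  have hHadj : ∀ {i j}, H.Adj i j ↔ G.Adj (f i) (f j) := Iff.rfl
  -- distance transfer
  have hdist : ∀ i j : Fin m, G.dist (f i) (f j) = 2 → H.dist i j = 2 := by
    intro i j hd
    have hnadj : ¬ G.Adj (f i) (f j) := by
      intro h
      have h1 := SimpleGraph.dist_eq_one_iff_adj.mpr h
      omega
    have hne : f i ≠ f j := by
      intro h; rw [h, SimpleGraph.dist_self] at hd; exact absurd hd (by norm_num)
    have hij : i ≠ j := fun h => hne (by rw [h])
    have hnadjH : ¬ H.Adj i j := hnadj
    obtain ⟨x, hx1, hx2⟩ := exists_mid_of_dist_two hd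
    by_cases hxv : x = v
    · subst hxv
      rcases hAdjv _ hx1.symm with h1 | h1 <;> rcases hAdjv _ hx2 with hh2 | hh2
      · exact absurd (h1.trans hh2.symm) hne
      · rcases hcase with hadj | ⟨cc, hccv, hac, hcb⟩
        · exact absurd (show G.Adj (f i) (f j) by rw [h1, hh2]; exact hadj) hnadj
        · obtain ⟨k, hk⟩ := Fin.exists_succAbove_eq hccv
          refine dist_eq_two' hij hnadjH (show H.Adj i k from ?_) (show H.Adj k j from ?_)
          · show G.Adj (f i) (f k); rw [h1, show f k = cc from hk]; exact hac
          · show G.Adj (f k) (f j); rw [hh2, show f k = cc from hk]; exact hcb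
      · rcases hcase with hadj | ⟨cc, hccv, hac, hcb⟩
        · exact absurd (show G.Adj (f i) (f j) by rw [h1, hh2]; exact hadj.symm) hnadj
        · obtain ⟨k, hk⟩ := Fin.exists_succAbove_eq hccv
          refine dist_eq_two' hij hnadjH (show H.Adj i k from ?_) (show H.Adj k j from ?_)
          · show G.Adj (f i) (f k); rw [h1, show f k = cc from hk]; exact hcb.symm
          · show G.Adj (f k) (f j); rw [hh2, show f k = cc from hk]; exact hac.symm
      · exact absurd (h1.trans hh2.symm) hne
    · obtain ⟨k, hk⟩ := Fin.exists_succAbove_eq hxv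
      refine dist_eq_two' hij hnadjH (show H.Adj i k from ?_) (show H.Adj k j from ?_)
      · show G.Adj (f i) (f k); rw [show f k = x from hk]; exact hx1
      · show G.Adj (f k) (f j); rw [show f k = x from hk]; exact hx2
  -- H is subcubic
  have hdeg' : ∀ i, (H.neighborSet i).ncard ≤ 3 := by
    intro i
    have hsub : f '' (H.neighborSet i) ⊆ G.neighborSet (f i) := by
      rintro _ ⟨j, hj, rfl⟩; exact hj
    calc (H.neighborSet i).ncard = (f '' H.neighborSet i).ncard :=
          (Set.ncard_image_of_injective _ hfinj).symm
      _ ≤ (G.neighborSet (f i)).ncard := Set.ncard_le_ncard hsub (Set.toFinite _)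
      _ ≤ 3 := hdeg _
  -- H is K4-minor-free
  have hK4' : ¬ HasMinor H (SimpleGraph.completeGraph (Fin 4)) := fun h => hK4 (hasMinor_of_comap hfinj h)
  -- get a 4-coloring of the exact square of H
  have hcol : (exactSquare H).Colorable 4 := by
    have := hmin m H (Nat.lt_succ_self m) hdeg' hK4'
    rwa [show ((4 : ℕ∞)) = ((4 : ℕ) : ℕ∞) by norm_num,
      SimpleGraph.chromaticNumber_le_iff_colorable] at this
  obtain ⟨c⟩ := hcol
  -- the set of vertices at distance exactly 2 from v is small
  set N2 : Set (Fin (m + 1)) := {u | G.dist v u = 2} with hN2def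
  have hN2card : N2.ncard ≤ 3 := by
    have hmem : ∀ u ∈ N2, ¬ G.Adj v u ∧ u ≠ v ∧ (G.Adj a u ∨ G.Adj b u) := by
      intro u hu
      have hd : G.dist v u = 2 := hu
      have hnadj : ¬ G.Adj v u := by
        intro h
        have h1 := SimpleGraph.dist_eq_one_iff_adj.mpr h
        omega
      have hnev : u ≠ v := by
        intro h; rw [h, SimpleGraph.dist_self] at hd; exact absurd hd (by norm_num)
      obtain ⟨x, hx1, hx2⟩ := exists_mid_of_dist_two hd
      rcases hAdjv x hx1 with rfl | rfl
      · exact ⟨hnadj, hnev, Or.inl hx2⟩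
      · exact ⟨hnadj, hnev, Or.inr hx2⟩
    rcases hcase with hadj | ⟨cc, hccv, hac, hcb⟩
    · have hsub : N2 ⊆ (G.neighborSet a \ {v, b}) ∪ (G.neighborSet b \ {v, a}) := by
        intro u hu
        obtain ⟨hnadj, hnev, hnab⟩ := hmem u hu
        have hua : u ≠ a := fun h => hnadj (h ▸ hva)
        have hub : u ≠ b := fun h => hnadj (h ▸ hvb)
        rcases hnab with h | h
        · exact Or.inl ⟨h, by simp [hnev, hub]⟩
        · exact Or.inr ⟨h, by simp [hnev, hua]⟩
      have hc1 : (G.neighborSet a \ {v, b}).ncard ≤ 1 := by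
        have hss : ({v, b} : Set (Fin (m+1))) ⊆ G.neighborSet a := by
          intro x hx
          simp only [Set.mem_insert_iff, Set.mem_singleton_iff] at hx
          rcases hx with rfl | rfl
          · exact hva.symm
          · exact hadj
        rw [Set.ncard_diff hss (Set.toFinite _)]
        have hp : ({v, b} : Set (Fin (m+1))).ncard = 2 := Set.ncard_pair (G.ne_of_adj hvb)
        have := hdeg a
        omega
      have hc2 : (G.neighborSet b \ {v, a}).ncard ≤ 1 := by
        have hss : ({v, a} : Set (Fin (m+1))) ⊆ G.neighborSet b := by
          intro x hx
          simp only [Set.mem_insert_iff, Set.mem_singleton_iff] at hx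
          rcases hx with rfl | rfl
          · exact hvb.symm
          · exact hadj.symm
        rw [Set.ncard_diff hss (Set.toFinite _)]
        have hp : ({v, a} : Set (Fin (m+1))).ncard = 2 := Set.ncard_pair (G.ne_of_adj hva)
        have := hdeg b
        omega
      calc N2.ncard ≤ _ := Set.ncard_le_ncard hsub (Set.toFinite _)
        _ ≤ _ := Set.ncard_union_le _ _
        _ ≤ 3 := by omega
    · have hsub : N2 ⊆ insert cc ((G.neighborSet a \ {v, cc}) ∪ (G.neighborSet b \ {v, cc})) := by
        intro u hu
        obtain ⟨hnadj, hnev, hnab⟩ := hmem u hu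
        by_cases hucc : u = cc
        · exact Set.mem_insert_iff.mpr (Or.inl hucc)
        · refine Set.mem_insert_iff.mpr (Or.inr ?_)
          rcases hnab with h | h
          · exact Or.inl ⟨h, by simp [hnev, hucc]⟩
          · exact Or.inr ⟨h, by simp [hnev, hucc]⟩
      have hc1 : (G.neighborSet a \ {v, cc}).ncard ≤ 1 := by
        have hss : ({v, cc} : Set (Fin (m+1))) ⊆ G.neighborSet a := by
          intro x hx
          simp only [Set.mem_insert_iff, Set.mem_singleton_iff] at hx
          rcases hx with rfl | rfl
          · exact hva.symm
          · exact hac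
        rw [Set.ncard_diff hss (Set.toFinite _)]
        have hp : ({v, cc} : Set (Fin (m+1))).ncard = 2 := Set.ncard_pair (Ne.symm hccv)
        have := hdeg a
        omega
      have hc2 : (G.neighborSet b \ {v, cc}).ncard ≤ 1 := by
        have hss : ({v, cc} : Set (Fin (m+1))) ⊆ G.neighborSet b := by
          intro x hx
          simp only [Set.mem_insert_iff, Set.mem_singleton_iff] at hx
          rcases hx with rfl | rfl
          · exact hvb.symm
          · exact hcb.symm
        rw [Set.ncard_diff hss (Set.toFinite _)]
        have hp : ({v, cc} : Set (Fin (m+1))).ncard = 2 := Set.ncard_pair (Ne.symm hccv)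
        have := hdeg b
        omega
      have hun := Set.ncard_union_le (G.neighborSet a \ {v, cc}) (G.neighborSet b \ {v, cc})
      have hins := Set.ncard_insert_le cc ((G.neighborSet a \ {v, cc}) ∪ (G.neighborSet b \ {v, cc}))
      have hle := Set.ncard_le_ncard hsub (Set.toFinite _)
      omega
  -- extend the coloring
  set c₀ : Fin (m + 1) → Fin 4 :=
    fun u => if h : u = v then 0 else c ((finSuccAboveEquiv v).symm ⟨u, h⟩) with hc₀def
  have hc₀ : ∀ i : Fin m, c₀ (f i) = c i := by
    intro i
    have h := hfne i
    simp only [hc₀def, dif_neg h]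
    congr 1
    have : (⟨f i, h⟩ : {x : Fin (m+1) // x ≠ v}) = finSuccAboveEquiv v i := by
      simp [finSuccAboveEquiv_apply, hf]
    rw [this, Equiv.symm_apply_apply]
  set S : Set (Fin 4) := c₀ '' N2 with hSdef
  have hScard : S.ncard ≤ 3 := le_trans (Set.ncard_image_le (Set.toFinite _)) hN2card
  obtain ⟨cv, hcv⟩ : ∃ cv : Fin 4, cv ∉ S := by
    rw [← Set.ne_univ_iff_exists_notMem]
    intro hS'
    rw [hS', Set.ncard_univ] at hScard
    simp [Nat.card_eq_fintype_card] at hScard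
  -- the extended coloring
  have hcolG : (exactSquare G).Colorable 4 := by
    refine ⟨SimpleGraph.Coloring.mk (fun u => if u = v then cv else c₀ u) ?_⟩
    intro u x hux heq
    have hd : G.dist u x = 2 := hux
    have hne : u ≠ x := by
      intro h; rw [h, SimpleGraph.dist_self] at hd; exact absurd hd (by norm_num)
    by_cases hu : u = v
    · have hxv : ¬ x = v := fun h => hne (hu.trans h.symm)
      rw [if_pos hu, if_neg hxv] at heq
      have hx2 : x ∈ N2 := by rw [hN2def]; simpa [← hu] using hd
      exact hcv (heq ▸ ⟨x, hx2, rfl⟩)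
    · by_cases hx : x = v
      · rw [if_neg hu, if_pos hx] at heq
        have hu2 : u ∈ N2 := by
          rw [hN2def]
          have : G.dist x u = 2 := by rwa [SimpleGraph.dist_comm]
          simpa [← hx] using this
        exact hcv (heq.symm ▸ ⟨u, hu2, rfl⟩)
      · obtain ⟨i, hi⟩ := Fin.exists_succAbove_eq hu
        obtain ⟨j, hj⟩ := Fin.exists_succAbove_eq hx
        have hd2 : H.dist i j = 2 := hdist i j (by
          show G.dist (v.succAbove i) (v.succAbove j) = 2
          rw [hi, hj]; exact hd)
        have : (exactSquare H).Adj i j := hd2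
        have hcij := c.valid this
        rw [if_neg hu, if_neg hx] at heq
        have hiu : f i = u := hi
        have hjx : f j = x := hj
        rw [← hiu, ← hjx, hc₀ i, hc₀ j] at heq
        exact hcij heq
  exact hbad (by
    rw [show ((4 : ℕ∞)) = ((4 : ℕ) : ℕ∞) by norm_num,
      SimpleGraph.chromaticNumber_le_iff_colorable]
    exact hcolG)
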